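/- Let X be a measurable space with probability measure μ₀, L₁, L₂ : X → (0, 1] measurable with L_i(x) ≥ c > 0 for all x, Z_i = ∫ L_i dμ₀, and posteriors μ_i(dx) = Z_i^{-1} L_i(x) μ₀(dx). If sup_x |L₁(x) − L₂(x)| ≤ δ, then the squared Hellinger distance satisfies d_Hell(μ₁, μ₂)² ≤ (1/Z₁) ∫ (√L₁ − √L₂)² dμ₀ + |Z₁^{−1/2} − Z₂^{−1/2}|² Z₂ ≤ (δ²/(4c·c)) ·(1/c) + c^{−3} δ², and in particular d_Hell(μ₁, μ₂) ≤ K δ for a constant K depending only on c. -/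

import Mathlib

open MeasureTheory

set_option maxHeartbeats 1600000 in
/-- Hellinger bound for posteriors. With likelihoods `c ≤ Lᵢ ≤ 1`,
`sup |L₁ − L₂| ≤ δ`, `Zᵢ = ∫ Lᵢ dμ₀`, and posterior densities `Lᵢ/Zᵢ` w.r.t. `μ₀`,
the squared Hellinger distance is bounded by
`(1/Z₁)∫(√L₁ − √L₂)² dμ₀ + |Z₁^{−1/2} − Z₂^{−1/2}|² Z₂ ≤ (δ²/(4c·c))(1/c) + c⁻³δ²`,
and in particular `d_Hell ≤ K δ` with `K` depending only on `c`. -/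
theorem stmt11 {X : Type*} [MeasurableSpace X] (μ₀ : Measure X)
    [IsProbabilityMeasure μ₀] (L₁ L₂ : X → ℝ)
    (hm₁ : Measurable L₁) (hm₂ : Measurable L₂)
    (c δ : ℝ) (hc : 0 < c) (hδ0 : 0 ≤ δ)
    (hlb : ∀ x, c ≤ L₁ x ∧ c ≤ L₂ x)
    (hub : ∀ x, L₁ x ≤ 1 ∧ L₂ x ≤ 1)
    (hδ : ∀ x, |L₁ x - L₂ x| ≤ δ) :
    (1 / 2) * (∫ x, (Real.sqrt (L₁ x / ∫ z, L₁ z ∂μ₀) -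
          Real.sqrt (L₂ x / ∫ z, L₂ z ∂μ₀)) ^ 2 ∂μ₀) ≤
        (1 / ∫ z, L₁ z ∂μ₀) *
            (∫ x, (Real.sqrt (L₁ x) - Real.sqrt (L₂ x)) ^ 2 ∂μ₀) +
          |(Real.sqrt (∫ z, L₁ z ∂μ₀))⁻¹ - (Real.sqrt (∫ z, L₂ z ∂μ₀))⁻¹| ^ 2 *
            (∫ z, L₂ z ∂μ₀) ∧
    (1 / ∫ z, L₁ z ∂μ₀) *
          (∫ x, (Real.sqrt (L₁ x) - Real.sqrt (L₂ x)) ^ 2 ∂μ₀) +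
        |(Real.sqrt (∫ z, L₁ z ∂μ₀))⁻¹ - (Real.sqrt (∫ z, L₂ z ∂μ₀))⁻¹| ^ 2 *
          (∫ z, L₂ z ∂μ₀) ≤
      (δ ^ 2 / (4 * c * c)) * (1 / c) + (c ^ 3)⁻¹ * δ ^ 2 ∧
    Real.sqrt ((1 / 2) * ∫ x, (Real.sqrt (L₁ x / ∫ z, L₁ z ∂μ₀) -
          Real.sqrt (L₂ x / ∫ z, L₂ z ∂μ₀)) ^ 2 ∂μ₀) ≤
      Real.sqrt ((1 / (4 * c * c)) * (1 / c) + (c ^ 3)⁻¹) * δ := by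
  have hL₁pos : ∀ x, (0:ℝ) < L₁ x := fun x => lt_of_lt_of_le hc (hlb x).1
  have hL₂pos : ∀ x, (0:ℝ) < L₂ x := fun x => lt_of_lt_of_le hc (hlb x).2
  have intbdd : ∀ (f : X → ℝ) (C : ℝ), Measurable f → (∀ x, |f x| ≤ C) →
      Integrable f μ₀ := fun f C hf hC =>
    (integrable_const C).mono' hf.aestronglyMeasurable
      (ae_of_all _ fun x => by simpa using hC x)
  have int₁ : Integrable L₁ μ₀ := intbdd L₁ 1 hm₁ fun x =>
    abs_le.mpr ⟨by linarith [(hlb x).1], (hub x).1⟩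
  have int₂ : Integrable L₂ μ₀ := intbdd L₂ 1 hm₂ fun x =>
    abs_le.mpr ⟨by linarith [(hlb x).2], (hub x).2⟩
  set Z₁ : ℝ := ∫ z, L₁ z ∂μ₀ with hZ₁def
  set Z₂ : ℝ := ∫ z, L₂ z ∂μ₀ with hZ₂def
  have hZ₁c : c ≤ Z₁ := by
    have := integral_mono (integrable_const c) int₁ (fun x => (hlb x).1)
    simpa using this
  have hZ₂c : c ≤ Z₂ := by
    have := integral_mono (integrable_const c) int₂ (fun x => (hlb x).2)
    simpa using this
  have hZ₁1 : Z₁ ≤ 1 := by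
    have := integral_mono int₁ (integrable_const 1) (fun x => (hub x).1)
    simpa using this
  have hZ₂1 : Z₂ ≤ 1 := by
    have := integral_mono int₂ (integrable_const 1) (fun x => (hub x).2)
    simpa using this
  have hZsub : Z₁ - Z₂ = ∫ x, (L₁ x - L₂ x) ∂μ₀ := (integral_sub int₁ int₂).symm
  clear_value Z₁ Z₂
  have hZdiff : (Z₁ - Z₂)^2 ≤ δ^2 := by
    have h1 := hZsub
    have h2 : |∫ x, (L₁ x - L₂ x) ∂μ₀| ≤ δ := by
      calc |∫ x, (L₁ x - L₂ x) ∂μ₀| ≤ ∫ x, |L₁ x - L₂ x| ∂μ₀ := by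
            simpa [Real.norm_eq_abs] using
              norm_integral_le_integral_norm (μ := μ₀) (f := fun x => L₁ x - L₂ x)
        _ ≤ δ := by
            have := integral_mono (int₁.sub int₂).abs (integrable_const δ) hδ
            simpa using this
    rw [h1]
    nlinarith [sq_abs (∫ x, (L₁ x - L₂ x) ∂μ₀), abs_nonneg (∫ x, (L₁ x - L₂ x) ∂μ₀)]
  clear hZsub
  have hc1 : c ≤ 1 := hZ₁c.trans hZ₁1
  have hZ₁pos : (0:ℝ) < Z₁ := lt_of_lt_of_le hc hZ₁c
  have hZ₂pos : (0:ℝ) < Z₂ := lt_of_lt_of_le hc hZ₂c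
  have ht₁ : (0:ℝ) < Real.sqrt Z₁ := Real.sqrt_pos.mpr hZ₁pos
  have ht₂ : (0:ℝ) < Real.sqrt Z₂ := Real.sqrt_pos.mpr hZ₂pos
  set d : ℝ := (Real.sqrt Z₁)⁻¹ - (Real.sqrt Z₂)⁻¹ with hddef
  clear_value d
  -- generic algebraic lemma
  have gen : ∀ a b t₁ t₂ : ℝ, 0 ≤ b → 0 < t₁ → 0 < t₂ →
      (1/2) * (a/t₁ - b/t₂)^2 ≤ (a - b)^2 / t₁^2 + b^2 * (t₁⁻¹ - t₂⁻¹)^2 := by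
    intro a b t₁ t₂ hb h1 h2
    have e : a/t₁ - b/t₂ = (a - b)/t₁ + b*(t₁⁻¹ - t₂⁻¹) := by
      field_simp
      ring
    rw [e]
    have h3 : ((a - b)/t₁)^2 = (a - b)^2 / t₁^2 := div_pow _ _ _
    nlinarith [sq_nonneg ((a - b)/t₁ - b*(t₁⁻¹ - t₂⁻¹))]
  -- key pointwise inequality
  have key : ∀ x, (1/2) * (Real.sqrt (L₁ x / Z₁) - Real.sqrt (L₂ x / Z₂))^2 ≤
      (Real.sqrt (L₁ x) - Real.sqrt (L₂ x))^2 / Z₁ + L₂ x * d^2 := by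
    intro x
    rw [Real.sqrt_div (hL₁pos x).le, Real.sqrt_div (hL₂pos x).le]
    have := gen (Real.sqrt (L₁ x)) (Real.sqrt (L₂ x)) (Real.sqrt Z₁) (Real.sqrt Z₂)
      (Real.sqrt_nonneg _) ht₁ ht₂
    rw [Real.sq_sqrt hZ₁pos.le, Real.sq_sqrt (hL₂pos x).le] at this
    rw [hddef]
    exact this
  -- sqrt of inputs ≥ sqrt c etc
  have sqrt_diff_sq : ∀ u v : ℝ, c ≤ u → c ≤ v → (u - v)^2 ≤ δ^2 →
      (Real.sqrt u - Real.sqrt v)^2 ≤ δ^2 / (4*c) := by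
    intro u v hu hv huv
    have hu0 : (0:ℝ) ≤ u := le_trans hc.le hu
    have hv0 : (0:ℝ) ≤ v := le_trans hc.le hv
    have ha := Real.sq_sqrt hu0
    have hb := Real.sq_sqrt hv0
    have hca : Real.sqrt c ≤ Real.sqrt u := Real.sqrt_le_sqrt hu
    have hcb : Real.sqrt c ≤ Real.sqrt v := Real.sqrt_le_sqrt hv
    have hcc := Real.sq_sqrt hc.le
    have hc0 : (0:ℝ) < Real.sqrt c := Real.sqrt_pos.mpr hc
    rw [le_div_iff₀ (by positivity)]
    have helper : ∀ a b : ℝ, (a^2 - b^2)^2 = (a - b)^2 * (a + b)^2 := fun a b => by ring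
    have hprod := helper (Real.sqrt u) (Real.sqrt v)
    rw [ha, hb] at hprod
    have hsum : 4*c ≤ (Real.sqrt u + Real.sqrt v)^2 := by nlinarith
    nlinarith [sq_nonneg (Real.sqrt u - Real.sqrt v), huv,
      mul_le_mul_of_nonneg_left hsum (sq_nonneg (Real.sqrt u - Real.sqrt v))]
  -- integrability
  have mS₁ : Measurable fun x => Real.sqrt (L₁ x) := hm₁.sqrt
  have mS₂ : Measurable fun x => Real.sqrt (L₂ x) := hm₂.sqrt
  have intA : Integrable (fun x => (Real.sqrt (L₁ x) - Real.sqrt (L₂ x))^2) μ₀ := by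
    apply intbdd _ 1 ((mS₁.sub mS₂).pow_const 2)
    intro x
    have h1 : Real.sqrt (L₁ x) ≤ 1 := Real.sqrt_le_one.mpr (hub x).1
    have h2 : Real.sqrt (L₂ x) ≤ 1 := Real.sqrt_le_one.mpr (hub x).2
    have h3 := Real.sqrt_nonneg (L₁ x)
    have h4 := Real.sqrt_nonneg (L₂ x)
    rw [abs_of_nonneg (sq_nonneg _)]
    show (Real.sqrt (L₁ x) - Real.sqrt (L₂ x))^2 ≤ 1
    nlinarith
  have intf : Integrable (fun x =>
      (Real.sqrt (L₁ x / Z₁) - Real.sqrt (L₂ x / Z₂))^2) μ₀ := by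
    apply intbdd _ (2/c) (((hm₁.div_const Z₁).sqrt.sub (hm₂.div_const Z₂).sqrt).pow_const 2)
    intro x
    have h1 : Real.sqrt (L₁ x / Z₁) ^ 2 = L₁ x / Z₁ :=
      Real.sq_sqrt (div_nonneg (hL₁pos x).le hZ₁pos.le)
    have h2 : Real.sqrt (L₂ x / Z₂) ^ 2 = L₂ x / Z₂ :=
      Real.sq_sqrt (div_nonneg (hL₂pos x).le hZ₂pos.le)
    have h3 : L₁ x / Z₁ ≤ 1 / c := by
      apply div_le_div₀ (by norm_num) (hub x).1 hc hZ₁c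
    have h4 : L₂ x / Z₂ ≤ 1 / c := by
      apply div_le_div₀ (by norm_num) (hub x).2 hc hZ₂c
    have h5 := Real.sqrt_nonneg (L₁ x / Z₁)
    have h6 := Real.sqrt_nonneg (L₂ x / Z₂)
    rw [abs_of_nonneg (sq_nonneg _)]
    have e : (Real.sqrt (L₁ x / Z₁) - Real.sqrt (L₂ x / Z₂))^2 =
        Real.sqrt (L₁ x / Z₁)^2 + Real.sqrt (L₂ x / Z₂)^2 -
          2*(Real.sqrt (L₁ x / Z₁) * Real.sqrt (L₂ x / Z₂)) := by ring
    show (Real.sqrt (L₁ x / Z₁) - Real.sqrt (L₂ x / Z₂))^2 ≤ 2/c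
    rw [e, h1, h2]
    have h7 := mul_nonneg h5 h6
    have e2 : (2:ℝ)/c = 1/c + 1/c := by ring
    rw [e2]
    linarith only [h3, h4, h7]
  have intg : Integrable (fun x =>
      (Real.sqrt (L₁ x) - Real.sqrt (L₂ x))^2 / Z₁ + L₂ x * d^2) μ₀ :=
    (intA.div_const Z₁).add (int₂.mul_const _)
  -- Part 1
  have part1 : (1/2) * (∫ x, (Real.sqrt (L₁ x / Z₁) - Real.sqrt (L₂ x / Z₂))^2 ∂μ₀) ≤
      (1/Z₁) * (∫ x, (Real.sqrt (L₁ x) - Real.sqrt (L₂ x))^2 ∂μ₀) + |d|^2 * Z₂ := by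
    calc (1/2) * (∫ x, (Real.sqrt (L₁ x / Z₁) - Real.sqrt (L₂ x / Z₂))^2 ∂μ₀)
        = ∫ x, (1/2) * (Real.sqrt (L₁ x / Z₁) - Real.sqrt (L₂ x / Z₂))^2 ∂μ₀ :=
          (integral_const_mul _ _).symm
      _ ≤ ∫ x, ((Real.sqrt (L₁ x) - Real.sqrt (L₂ x))^2 / Z₁ + L₂ x * d^2) ∂μ₀ :=
          integral_mono (intf.const_mul _) intg key
      _ = (1/Z₁) * (∫ x, (Real.sqrt (L₁ x) - Real.sqrt (L₂ x))^2 ∂μ₀) + |d|^2 * Z₂ := by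
          rw [integral_add (intA.div_const Z₁) (int₂.mul_const _),
            integral_div, integral_mul_const, sq_abs, ← hZ₂def]
          ring
  -- bounds for part 2
  have hSnn : (0:ℝ) ≤ ∫ x, (Real.sqrt (L₁ x) - Real.sqrt (L₂ x))^2 ∂μ₀ :=
    integral_nonneg fun x => sq_nonneg _
  have hS : (∫ x, (Real.sqrt (L₁ x) - Real.sqrt (L₂ x))^2 ∂μ₀) ≤ δ^2 / (4*c) := by
    have := integral_mono intA (integrable_const (δ^2/(4*c))) (fun x => by
      apply sqrt_diff_sq _ _ (hlb x).1 (hlb x).2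
      have := hδ x
      have h2 := abs_nonneg (L₁ x - L₂ x)
      nlinarith [sq_abs (L₁ x - L₂ x)])
    simpa using this
  have hd2 : d^2 ≤ δ^2 / (4*c^3) := by
    have hnum : (Real.sqrt Z₁ - Real.sqrt Z₂)^2 ≤ δ^2/(4*c) :=
      sqrt_diff_sq Z₁ Z₂ hZ₁c hZ₂c hZdiff
    have hde : d = (Real.sqrt Z₂ - Real.sqrt Z₁) / (Real.sqrt Z₁ * Real.sqrt Z₂) := by
      rw [hddef]; field_simp
    have hden : c^2 ≤ (Real.sqrt Z₁ * Real.sqrt Z₂)^2 := by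
      have e1 := Real.sq_sqrt hZ₁pos.le
      have e2 := Real.sq_sqrt hZ₂pos.le
      nlinarith [mul_nonneg ht₁.le ht₂.le]
    have : d^2 ≤ (δ^2/(4*c)) / c^2 := by
      rw [hde, div_pow]
      apply div_le_div₀ (by positivity) _ (by positivity) hden
      calc (Real.sqrt Z₂ - Real.sqrt Z₁)^2 = (Real.sqrt Z₁ - Real.sqrt Z₂)^2 := by ring
        _ ≤ δ^2/(4*c) := hnum
    calc d^2 ≤ (δ^2/(4*c)) / c^2 := this
      _ = δ^2/(4*c^3) := by
            rw [div_div]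
            ring_nf
  have part2 : (1/Z₁) * (∫ x, (Real.sqrt (L₁ x) - Real.sqrt (L₂ x))^2 ∂μ₀) + |d|^2 * Z₂ ≤
      (δ^2 / (4*c*c)) * (1/c) + (c^3)⁻¹ * δ^2 := by
    have t1 : (1/Z₁) * (∫ x, (Real.sqrt (L₁ x) - Real.sqrt (L₂ x))^2 ∂μ₀) ≤
        (δ^2 / (4*c*c)) * (1/c) := by
      calc (1/Z₁) * (∫ x, (Real.sqrt (L₁ x) - Real.sqrt (L₂ x))^2 ∂μ₀)
          ≤ (1/c) * (δ^2/(4*c)) := by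
            apply mul_le_mul _ hS hSnn (by positivity)
            exact one_div_le_one_div_of_le hc hZ₁c
        _ = δ^2/(4*c^2) := by ring
        _ ≤ δ^2/(4*c^3) := by
            apply div_le_div_of_nonneg_left (sq_nonneg δ) (by positivity)
              (by nlinarith [pow_pos hc 3])
        _ = (δ^2 / (4*c*c)) * (1/c) := by ring
    have t2 : |d|^2 * Z₂ ≤ (c^3)⁻¹ * δ^2 := by
      rw [sq_abs]
      calc d^2 * Z₂ ≤ (δ^2/(4*c^3)) * 1 :=
            mul_le_mul hd2 hZ₂1 hZ₂pos.le (by positivity)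
        _ ≤ (c^3)⁻¹ * δ^2 := by
            rw [mul_one, inv_mul_eq_div]
            apply div_le_div₀ (by positivity) le_rfl (by positivity)
            nlinarith [pow_pos hc 3]
    exact add_le_add t1 t2
  refine ⟨part1, part2, ?_⟩
  have hK : (0:ℝ) ≤ (1/(4*c*c)) * (1/c) + (c^3)⁻¹ := by positivity
  calc Real.sqrt ((1/2) * ∫ x, (Real.sqrt (L₁ x / Z₁) - Real.sqrt (L₂ x / Z₂))^2 ∂μ₀)
      ≤ Real.sqrt (((1/(4*c*c)) * (1/c) + (c^3)⁻¹) * δ^2) := by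
        apply Real.sqrt_le_sqrt
        calc (1/2) * ∫ x, (Real.sqrt (L₁ x / Z₁) - Real.sqrt (L₂ x / Z₂))^2 ∂μ₀
            ≤ (δ^2/(4*c*c)) * (1/c) + (c^3)⁻¹ * δ^2 := part1.trans part2
          _ = ((1/(4*c*c)) * (1/c) + (c^3)⁻¹) * δ^2 := by ring
    _ = Real.sqrt ((1/(4*c*c)) * (1/c) + (c^3)⁻¹) * δ := by
        rw [Real.sqrt_mul hK, Real.sqrt_sq hδ0]
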